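/- Let c ∈ ℝ, p0 > 0, D : ℝ → ℝ with D(p0) > 0 and D'(p0) < 0 (D differentiable at p0), let e_p(p0) := D'(p0)·p0/D(p0), and let Δ ∈ ℝ. Then a change of sign occurs, i.e. D(p0) + (p0 − c)·Δ ≤ 0 ≤ D(p0) + (p0 − c)·D'(p0), if and only if both (a) (p0 − c)/p0 ≤ −1/e_p(p0) and (b) −1/e_p(p0) ≤ ((p0 − c)/p0)·Δ/D'(p0) hold. -/

import Mathlib

open Filter Topology

/-- a change of sign occurs iff both the markup inequality (a)
and the modified markup inequality (b) hold. -/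
theorem change_of_sign_iff
    (c p0 : ℝ) (hp0 : 0 < p0) (D : ℝ → ℝ)
    (hD : DifferentiableAt ℝ D p0)
    (hDpos : 0 < D p0) (hD' : deriv D p0 < 0) (Δ : ℝ) :
    (D p0 + (p0 - c) * Δ ≤ 0 ∧ 0 ≤ D p0 + (p0 - c) * deriv D p0) ↔
      ((p0 - c) / p0 ≤ -(1 / (deriv D p0 * p0 / D p0)) ∧
        -(1 / (deriv D p0 * p0 / D p0)) ≤ (p0 - c) / p0 * Δ / deriv D p0) := by
  set d := deriv D p0 with hd
  have hdn : d ≠ 0 := ne_of_lt hD'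
  have hpn : p0 ≠ 0 := ne_of_gt hp0
  have hDn : D p0 ≠ 0 := ne_of_gt hDpos
  have hpos : 0 < p0 * (-d) := by nlinarith
  have hA : -(1 / (d * p0 / D p0)) = D p0 / (p0 * (-d)) := by
    field_simp
  have hB : (p0 - c) / p0 * Δ / d = (-((p0 - c) * Δ)) / (p0 * (-d)) := by
    field_simp
  rw [hA, hB, div_le_div_iff₀ hp0 hpos, div_le_div_iff₀ hpos hpos]
  constructor
  · rintro ⟨h1, h2⟩
    constructor <;> nlinarith
  · rintro ⟨h1, h2⟩
    constructor <;> nlinarith
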